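/- Let g be a finite-dimensional real Lie algebra, V a finite-dimensional real inner product space with orthonormal basis e₁,…,eₙ, and r : g → End(V) a Lie algebra representation by skew-adjoint operators. Then the ℝ-subalgebra of U(g) ⊗ Cl(V) generated by the set {ι_U(X) ⊗ 1 + 1 ⊗ (r X)~ : X ∈ g} ∪ {1 ⊗ ι(v) : v ∈ V} is all of U(g) ⊗ Cl(V). -/

import Mathlib

open scoped RealInnerProductSpace TensorProduct

attribute [local instance] LieRing.ofAssociativeRing

/-- The quantization `Ã = −(1/4) ∑ᵢ ι(eᵢ)·ι(A eᵢ)` of an endomorphism `A` of a real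
inner product space `V` inside the Clifford algebra of `V`. -/
noncomputable def quantize {V : Type*} [NormedAddCommGroup V] [InnerProductSpace ℝ V]
    {n : ℕ} (b : OrthonormalBasis (Fin n) ℝ V) (Q : QuadraticForm ℝ V)
    (A : V →ₗ[ℝ] V) : CliffordAlgebra Q :=
  -((1 : ℝ)/4) • ∑ i, CliffordAlgebra.ι Q (b i) * CliffordAlgebra.ι Q (A (b i))

set_option maxHeartbeats 1000000 in
set_option synthInstance.maxHeartbeats 400000 in
/-- The universal enveloping algebra is generated by the image of `ι`. -/
theorem uea_adjoin_range_ι_eq_top (R : Type*) (L : Type*) [CommRing R] [LieRing L]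
    [LieAlgebra R L] :
    Algebra.adjoin R (Set.range (UniversalEnvelopingAlgebra.ι R (L := L))) = ⊤ := by
  set A := Algebra.adjoin R (Set.range (UniversalEnvelopingAlgebra.ι R (L := L))) with hA
  let f : L →ₗ⁅R⁆ A :=
    { toFun := fun X => ⟨UniversalEnvelopingAlgebra.ι R X,
        Algebra.subset_adjoin ⟨X, rfl⟩⟩
      map_add' := fun X Y => by ext; simp
      map_smul' := fun c X => by ext; simp
      map_lie' := fun {X Y} => by
        ext
        simp only [LieHom.map_lie]
        rfl }
  have h : A.val.comp (UniversalEnvelopingAlgebra.lift R f) = AlgHom.id R _ := by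
    ext X
    simp [f]
  rw [eq_top_iff]
  intro u _
  have := congrArg (fun φ => φ u) h
  simp only [AlgHom.comp_apply, AlgHom.id_apply] at this
  rw [← this]
  exact (UniversalEnvelopingAlgebra.lift R f u).2

/-- For a representation `r` of a finite-dimensional real Lie algebra `g` by skew-adjoint
operators on a finite-dimensional real inner product space `V`, the subalgebra of
`U(g) ⊗ Cl(V)` generated by the elements `ι_U(X) ⊗ 1 + 1 ⊗ (r X)~` for `X ∈ g` together
with the elements `1 ⊗ ι(v)` for `v ∈ V` is the whole algebra. -/
theorem diagonal_and_clifford_generate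
    {g : Type*} [LieRing g] [LieAlgebra ℝ g] [Module.Finite ℝ g]
    {V : Type*} [NormedAddCommGroup V] [InnerProductSpace ℝ V] [FiniteDimensional ℝ V]
    {n : ℕ} (b : OrthonormalBasis (Fin n) ℝ V)
    (Q : QuadraticForm ℝ V) (hQ : ∀ v : V, Q v = -⟪v, v⟫)
    (r : g →ₗ⁅ℝ⁆ Module.End ℝ V)
    (hr : ∀ (X : g) (v w : V), ⟪r X v, w⟫ = -⟪v, r X w⟫) :
    Algebra.adjoin ℝ
      ((Set.range fun X : g =>
          (UniversalEnvelopingAlgebra.ι ℝ X) ⊗ₜ[ℝ] (1 : CliffordAlgebra Q)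
            + 1 ⊗ₜ[ℝ] quantize b Q (r X)) ∪
        (Set.range fun v : V =>
          (1 : UniversalEnvelopingAlgebra ℝ g) ⊗ₜ[ℝ] CliffordAlgebra.ι Q v)) = ⊤ := by
  set S := Algebra.adjoin ℝ
      ((Set.range fun X : g =>
          (UniversalEnvelopingAlgebra.ι ℝ X) ⊗ₜ[ℝ] (1 : CliffordAlgebra Q)
            + 1 ⊗ₜ[ℝ] quantize b Q (r X)) ∪
        (Set.range fun v : V =>
          (1 : UniversalEnvelopingAlgebra ℝ g) ⊗ₜ[ℝ] CliffordAlgebra.ι Q v)) with hS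
  have hV : ∀ v : V, (1 : UniversalEnvelopingAlgebra ℝ g) ⊗ₜ[ℝ] CliffordAlgebra.ι Q v ∈ S :=
    fun v => Algebra.subset_adjoin (Or.inr ⟨v, rfl⟩)
  have hCl : ∀ c : CliffordAlgebra Q, (1 : UniversalEnvelopingAlgebra ℝ g) ⊗ₜ[ℝ] c ∈ S := by
    intro c
    induction c using CliffordAlgebra.induction with
    | algebraMap s =>
      have : (1 : UniversalEnvelopingAlgebra ℝ g) ⊗ₜ[ℝ]
          (algebraMap ℝ (CliffordAlgebra Q) s) =
          algebraMap ℝ _ s := by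
        rw [Algebra.algebraMap_eq_smul_one, TensorProduct.tmul_smul,
          Algebra.algebraMap_eq_smul_one]
        rfl
      rw [this]
      exact S.algebraMap_mem s
    | ι v => exact hV v
    | mul a c ha hc =>
      have : (1 : UniversalEnvelopingAlgebra ℝ g) ⊗ₜ[ℝ] (a * c) =
          ((1 : UniversalEnvelopingAlgebra ℝ g) ⊗ₜ[ℝ] a) * (1 ⊗ₜ[ℝ] c) := by
        rw [Algebra.TensorProduct.tmul_mul_tmul, one_mul]
      rw [this]; exact mul_mem ha hc
    | add a c ha hc =>
      rw [TensorProduct.tmul_add]; exact add_mem ha hc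
  have hU1 : ∀ X : g,
      (UniversalEnvelopingAlgebra.ι ℝ X) ⊗ₜ[ℝ] (1 : CliffordAlgebra Q) ∈ S := by
    intro X
    have h1 : (UniversalEnvelopingAlgebra.ι ℝ X) ⊗ₜ[ℝ] (1 : CliffordAlgebra Q)
        + 1 ⊗ₜ[ℝ] quantize b Q (r X) ∈ S :=
      Algebra.subset_adjoin (Or.inl ⟨X, rfl⟩)
    have h2 := hCl (quantize b Q (r X))
    have := sub_mem h1 h2
    simpa using this
  have hU : ∀ u : UniversalEnvelopingAlgebra ℝ g,
      u ⊗ₜ[ℝ] (1 : CliffordAlgebra Q) ∈ S := by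
    let T : Subalgebra ℝ (UniversalEnvelopingAlgebra ℝ g) :=
      { carrier := {u | u ⊗ₜ[ℝ] (1 : CliffordAlgebra Q) ∈ S}
        mul_mem' := fun {a c} ha hc => by
          have : (a * c) ⊗ₜ[ℝ] (1 : CliffordAlgebra Q) =
              (a ⊗ₜ[ℝ] (1 : CliffordAlgebra Q)) * (c ⊗ₜ[ℝ] 1) := by
            rw [Algebra.TensorProduct.tmul_mul_tmul, one_mul]
          show (a * c) ⊗ₜ[ℝ] (1 : CliffordAlgebra Q) ∈ S
          rw [this]; exact mul_mem ha hc
        add_mem' := fun {a c} ha hc => by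
          show (a + c) ⊗ₜ[ℝ] (1 : CliffordAlgebra Q) ∈ S
          rw [TensorProduct.add_tmul]; exact add_mem ha hc
        algebraMap_mem' := fun s => by
          show (algebraMap ℝ (UniversalEnvelopingAlgebra ℝ g) s) ⊗ₜ[ℝ]
            (1 : CliffordAlgebra Q) ∈ S
          have : (algebraMap ℝ (UniversalEnvelopingAlgebra ℝ g) s) ⊗ₜ[ℝ]
              (1 : CliffordAlgebra Q) = algebraMap ℝ _ s := by
            rw [Algebra.algebraMap_eq_smul_one, ← TensorProduct.smul_tmul',
              Algebra.algebraMap_eq_smul_one]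
            rfl
          rw [this]; exact S.algebraMap_mem s }
    intro u
    have hT : T = ⊤ := by
      rw [eq_top_iff, ← uea_adjoin_range_ι_eq_top ℝ g]
      apply Algebra.adjoin_le
      rintro _ ⟨X, rfl⟩
      exact hU1 X
    have : u ∈ T := hT ▸ Algebra.mem_top
    exact this
  rw [eq_top_iff]
  rintro x -
  induction x using TensorProduct.induction_on with
  | zero => exact zero_mem S
  | tmul u c =>
    have : u ⊗ₜ[ℝ] c = (u ⊗ₜ[ℝ] (1 : CliffordAlgebra Q)) *
        ((1 : UniversalEnvelopingAlgebra ℝ g) ⊗ₜ[ℝ] c) := by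
      rw [Algebra.TensorProduct.tmul_mul_tmul, mul_one, one_mul]
    rw [this]; exact mul_mem (hU u) (hCl c)
  | add a c ha hc => exact add_mem ha hc
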